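/- Let a ≥ 0, c′ ≥ 0, H₁ ≥ 0, H₂ ≥ 0, λ̂ > λ > 0, γ > β > 0, and t_k ≥ 0, and define H₃ = c′·(H₁·exp((λ−λ̂)·t_k)/(a+λ̂) + H₂/(a+λ)); assume H₃ ≥ 0. Then the number ε = ln((γ + H₃)/(β + H₃))/(a + λ̂) is strictly positive and satisfies the equality β·exp(a·ε) + (exp(a·ε) − exp(−λ̂·ε))·(H₁·c′/(a+λ̂))·exp((λ−λ̂)·t_k) + (exp(a·ε) − exp(−λ̂·ε))·(H₂·c′/(a+λ)) = γ·exp(−λ̂·ε). Moreover, H₃ ≤ c′·(H₁/(a+λ̂) + H₂/(a+λ)) uniformly over all t_k ≥ 0, so ε remains bounded away from zero. -/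

import Mathlib

/-- With `H₃ = c′(H₁ e^{(λ-λ̂)t_k}/(a+λ̂) + H₂/(a+λ)) ≥ 0` and `γ > β > 0`,
the number `ε = ln((γ+H₃)/(β+H₃))/(a+λ̂)` is strictly positive, satisfies the stated
equality (with decay rate `λ̂` in both exponential difference factors on the left-hand side),
and `H₃` is uniformly bounded by `c′(H₁/(a+λ̂) + H₂/(a+λ))` over all `t_k ≥ 0`. -/
theorem stmt12 (a c' H₁ H₂ lamhat lam γ β tk : ℝ)
    (ha : 0 ≤ a) (hc' : 0 ≤ c') (hH₁ : 0 ≤ H₁) (hH₂ : 0 ≤ H₂)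
    (hlam : 0 < lam) (hlamlt : lam < lamhat) (hβ : 0 < β) (hγβ : β < γ) (htk : 0 ≤ tk)
    (H₃ : ℝ)
    (hH₃def : H₃ = c' * (H₁ * Real.exp ((lam - lamhat) * tk) / (a + lamhat) + H₂ / (a + lam)))
    (hH₃nonneg : 0 ≤ H₃)
    (ε : ℝ) (hεdef : ε = Real.log ((γ + H₃) / (β + H₃)) / (a + lamhat)) :
    0 < ε ∧
    (β * Real.exp (a * ε) +
      (Real.exp (a * ε) - Real.exp (-(lamhat * ε))) * (H₁ * c' / (a + lamhat)) *
        Real.exp ((lam - lamhat) * tk) +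
      (Real.exp (a * ε) - Real.exp (-(lamhat * ε))) * (H₂ * c' / (a + lam)) =
        γ * Real.exp (-(lamhat * ε))) ∧
    H₃ ≤ c' * (H₁ / (a + lamhat) + H₂ / (a + lam)) := by

  have hs : 0 < a + lamhat := by linarith
  have hp : 0 < a + lam := by linarith
  have hβH : 0 < β + H₃ := by linarith
  have hγH : 0 < γ + H₃ := by linarith
  have hratio : 1 < (γ + H₃) / (β + H₃) := by
    rw [lt_div_iff₀ hβH]; linarith
  have hεpos : 0 < ε := by
    rw [hεdef]
    exact div_pos (Real.log_pos hratio) hs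
  have hexp : Real.exp ((a + lamhat) * ε) = (γ + H₃) / (β + H₃) := by
    rw [hεdef, mul_div_cancel₀ _ (ne_of_gt hs), Real.exp_log (by positivity)]
  have hAL : Real.exp (a * ε) * Real.exp (lamhat * ε) = (γ + H₃) / (β + H₃) := by
    rw [← Real.exp_add, ← hexp]; ring_nf
  have hE1 : Real.exp ((lam - lamhat) * tk) ≤ 1 := by
    apply Real.exp_le_one_iff.mpr
    nlinarith
  refine ⟨hεpos, ?_, ?_⟩
  · have hL : 0 < Real.exp (lamhat * ε) := Real.exp_pos _
    subst hH₃def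
    rw [Real.exp_neg]
    field_simp at hAL ⊢
    linear_combination hAL
  · rw [hH₃def]
    gcongr <;> nlinarith [hE1]
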